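/- Let T, S be locally finite small trees with models μ : V(T) → {connected subgraphs of S} witnessing T ≤* S and ν witnessing S ≤* T. Then for every vertex v of T with deg(v) > 2, the branch set μ(v) contains exactly one vertex of S of degree greater than 2. -/

import Mathlib

open SimpleGraph

/-- A ray in a graph: a one-way infinite path. -/
def IsRay {V : Type*} (G : SimpleGraph V) (f : ℕ → V) : Prop :=
  Function.Injective f ∧ ∀ n, G.Adj (f n) (f (n + 1))

/-- The degree of a vertex, as an extended natural number. -/
noncomputable def eDeg {V : Type*} (G : SimpleGraph V) (v : V) : ℕ∞ :=
  (G.neighborSet v).encard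

/-- A ray is eventually bare if from some index on all its vertices have degree 2. -/
def EventuallyBare {V : Type*} (G : SimpleGraph V) (f : ℕ → V) : Prop :=
  ∃ M : ℕ, ∀ n ≥ M, eDeg G (f n) = 2

/-- A tree is small if every ray in it is eventually bare. -/
def IsSmall {V : Type*} (G : SimpleGraph V) : Prop :=
  ∀ f : ℕ → V, IsRay G f → EventuallyBare G f

/-- A minor model of `T` in `S`: pairwise disjoint nonempty connected branch sets,
every edge of `T` witnessed by an edge of `S` between the corresponding branch sets. -/
structure IsModel {V W : Type*} (T : SimpleGraph V) (S : SimpleGraph W)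
    (μ : V → Set W) : Prop where
  nonempty : ∀ v, (μ v).Nonempty
  connected : ∀ v, (S.induce (μ v)).Connected
  disjoint : ∀ v w, v ≠ w → Disjoint (μ v) (μ w)
  edge : ∀ v w, T.Adj v w → ∃ a ∈ μ v, ∃ b ∈ μ w, S.Adj a b

/-- `T` is a minor of `S`. -/
def IsMinorOf {V W : Type*} (T : SimpleGraph V) (S : SimpleGraph W) : Prop :=
  ∃ μ : V → Set W, IsModel T S μ

/-- Tree order relative to a root: `v` lies on the (unique) path from `r` to `w`. -/
def treeLE {V : Type*} (G : SimpleGraph V) (r v w : V) : Prop :=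
  v = w ∨ ∃ p : G.Walk r w, p.IsPath ∧ v ∈ p.support

/-- Closure of a vertex set: the set together with all vertices on paths joining its members. -/
def treeClosure {V : Type*} (G : SimpleGraph V) (A : Set V) : Set V :=
  A ∪ {x | ∃ a ∈ A, ∃ b ∈ A, ∃ p : G.Walk a b, p.IsPath ∧ x ∈ p.support}



section Helpers
variable {W : Type*} {S : SimpleGraph W}

lemma three_adj {W : Type*} (S : SimpleGraph W) {w c1 c2 c3 : W}
    (h12 : c1 ≠ c2) (h13 : c1 ≠ c3) (h23 : c2 ≠ c3)
    (a1 : S.Adj w c1) (a2 : S.Adj w c2) (a3 : S.Adj w c3) :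
    2 < eDeg S w := by
  have hsub : ({c1, c2, c3} : Set W) ⊆ S.neighborSet w := by
    intro x hx
    rcases hx with rfl | rfl | rfl <;> assumption
  have h3 : ({c1, c2, c3} : Set W).encard = 3 := by
    rw [Set.encard_insert_of_notMem (by simp [h12, h13]),
      Set.encard_insert_of_notMem (by simp [h23]), Set.encard_singleton]
    rfl
  have := Set.encard_le_encard hsub
  rw [h3] at this
  exact lt_of_lt_of_le (by norm_num) this

lemma two_lt_encard {α : Type*} {s : Set α} (h : 2 < s.encard) :
    ∃ x ∈ s, ∃ y ∈ s, ∃ z ∈ s, x ≠ y ∧ x ≠ z ∧ y ≠ z := by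
  obtain ⟨x, hx, y, hy, hxy⟩ := (by obtain ⟨a,b,ha,hb,hab⟩ := Set.one_lt_encard_iff.mp (lt_of_lt_of_le (by norm_num : (1:ℕ∞) < 2) (le_of_lt h)); exact ⟨a,ha,b,hb,hab⟩ : ∃ x ∈ s, ∃ y ∈ s, x ≠ y)
  by_cases hsub : s ⊆ {x, y}
  · have := Set.encard_le_encard hsub
    have hle : ({x, y} : Set α).encard ≤ 2 := by
      apply le_trans (Set.encard_insert_le _ _)
      rw [Set.encard_singleton]; rfl
    have : s.encard ≤ 2 := le_trans this hle
    exact absurd h (not_lt.mpr this)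
  · obtain ⟨z, hz, hz2⟩ := Set.not_subset.mp hsub
    exact ⟨x, hx, y, hy, z, hz, hxy, fun h => hz2 (by simp [h.symm]), fun h => hz2 (by simp [h.symm])⟩

-- H1: second vertex
lemma second_vertex {a b : W} (p : S.Walk a b) (hab : a ≠ b) :
    ∃ c ∈ p.support, S.Adj a c := by
  cases p with
  | nil => exact absurd rfl hab
  | @cons _ x _ h q => exact ⟨x, by simp, h⟩

-- H2: internal vertex has two distinct neighbors on the path
lemma internal_two_adj {a b m : W} (p : S.Walk a b) (hp : p.IsPath)
    (hm : m ∈ p.support) (hma : m ≠ a) (hmb : m ≠ b) :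
    ∃ c ∈ p.support, ∃ d ∈ p.support, c ≠ d ∧ S.Adj m c ∧ S.Adj m d := by
  classical
  set t := p.takeUntil m hm with ht
  set dr := p.dropUntil m hm with hd
  have hspec : t.append dr = p := p.take_spec hm
  obtain ⟨c, hc, hcadj⟩ := second_vertex t.reverse hma
  rw [Walk.support_reverse, List.mem_reverse] at hc
  obtain ⟨d, hd', hdadj⟩ := second_vertex dr hmb
  have hnodup : (t.support ++ dr.support.tail).Nodup := by
    have := hp.support_nodup
    rw [← hspec, Walk.support_append] at this
    exact this
  have hdm : d ≠ m := (S.ne_of_adj hdadj).symm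
  have hdtail : d ∈ dr.support.tail := by
    have h2 : d ∈ m :: dr.support.tail := dr.support_eq_cons ▸ hd'
    rcases List.mem_cons.mp h2 with hh | hh
    · exact absurd hh hdm
    · exact hh
  have hcd : c ≠ d := by
    intro hEq
    exact (List.disjoint_of_nodup_append hnodup) hc (hEq ▸ hdtail)
  refine ⟨c, ?_, d, ?_, hcd, hcadj, hdadj⟩
  · rw [← hspec, Walk.mem_support_append_iff]; left; exact hc
  · rw [← hspec, Walk.mem_support_append_iff]; right; exact hd'

-- H3: first vertex of a walk in a set
lemma exists_first {y : W} (P : Set W) (hy : y ∈ P) :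
    ∀ {x : W} (q : S.Walk x y), x ∉ P →
    ∃ m ∈ P, ∃ n, S.Adj n m ∧ n ∉ P ∧ n ∈ q.support := by
  intro x q
  induction q with
  | nil => intro hx; exact absurd hy hx
  | @cons u z _ h q ih =>
    intro hx
    by_cases hz : z ∈ P
    · exact ⟨z, hz, u, h, hx, by simp⟩
    · obtain ⟨m, hm, n, hnm, hnP, hns⟩ := ih hy hz
      exact ⟨m, hm, n, hnm, hnP, by simp [hns]⟩

lemma path_in {A : Set W} (hA : (S.induce A).Connected) {a b : W} (ha : a ∈ A) (hb : b ∈ A) :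
    ∃ p : S.Walk a b, p.IsPath ∧ ∀ x ∈ p.support, x ∈ A := by
  classical
  obtain ⟨q⟩ := hA ⟨a, ha⟩ ⟨b, hb⟩
  let f : S.induce A →g S := (SimpleGraph.Embedding.induce A).toHom
  let w : S.Walk a b := q.map f
  refine ⟨w.bypass, Walk.bypass_isPath w, fun x hx => ?_⟩
  have hx' := Walk.support_bypass_subset w hx
  change x ∈ (q.map f).support at hx'
  rw [Walk.support_map] at hx'
  obtain ⟨⟨y, hy⟩, _, rfl⟩ := List.mem_map.mp hx'
  exact hy

-- vertex a ∈ A with two outside neighbors and another vertex of A elsewhere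
lemma two_out {A : Set W} (hA : (S.induce A).Connected) {a a' b b' : W}
    (ha : a ∈ A) (ha' : a' ∈ A) (haa' : a ≠ a') (hb : b ∉ A) (hb' : b' ∉ A) (hbb' : b ≠ b')
    (adb : S.Adj a b) (adb' : S.Adj a b') : ∃ w ∈ A, 2 < eDeg S w := by
  obtain ⟨p, hp, hsub⟩ := path_in hA ha ha'
  obtain ⟨c, hc, hac⟩ := second_vertex p haa'
  have hcA : c ∈ A := hsub c hc
  exact ⟨a, ha, three_adj S hbb' (fun h => hb (by rw [h]; exact hcA)) (fun h => hb' (by rw [h]; exact hcA)) adb adb' hac⟩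

lemma branch_big {V : Type*} (T : SimpleGraph V) (μ : V → Set W)
    (hμ : IsModel T S μ) (v : V) (hv : 2 < eDeg T v) : ∃ w ∈ μ v, 2 < eDeg S w := by
  obtain ⟨x1, hx1, x2, hx2, x3, hx3, h12, h13, h23⟩ := two_lt_encard hv
  rw [mem_neighborSet] at hx1 hx2 hx3
  obtain ⟨a1, ha1, b1, hb1, e1⟩ := hμ.edge v x1 hx1
  obtain ⟨a2, ha2, b2, hb2, e2⟩ := hμ.edge v x2 hx2
  obtain ⟨a3, ha3, b3, hb3, e3⟩ := hμ.edge v x3 hx3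
  set A := μ v with hA
  have hAc := hμ.connected v
  have houtside : ∀ x : V, x ≠ v → ∀ b ∈ μ x, b ∉ A :=
    fun x hx b hbx hbA => Set.disjoint_left.mp (hμ.disjoint x v hx) hbx hbA
  have hB1 : b1 ∉ A := houtside x1 hx1.ne' b1 hb1
  have hB2 : b2 ∉ A := houtside x2 hx2.ne' b2 hb2
  have hB3 : b3 ∉ A := houtside x3 hx3.ne' b3 hb3
  have hdisj : ∀ (x y : V), x ≠ y → ∀ b ∈ μ x, ∀ b' ∈ μ y, b ≠ b' := by
    intro x y hxy b hb b' hb' hEq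
    exact Set.disjoint_left.mp (hμ.disjoint x y hxy) hb (hEq ▸ hb')
  have hb12 : b1 ≠ b2 := hdisj x1 x2 h12 b1 hb1 b2 hb2
  have hb13 : b1 ≠ b3 := hdisj x1 x3 h13 b1 hb1 b3 hb3
  have hb23 : b2 ≠ b3 := hdisj x2 x3 h23 b2 hb2 b3 hb3
  by_cases e12 : a1 = a2
  · by_cases e13 : a1 = a3
    · exact ⟨a1, ha1, three_adj S hb12 hb13 hb23 e1 (e12 ▸ e2) (e13 ▸ e3)⟩
    · exact two_out hAc ha1 ha3 e13 hB1 hB2 hb12 e1 (e12 ▸ e2)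
  · by_cases e13 : a1 = a3
    · exact two_out hAc ha1 ha2 e12 hB1 hB3 hb13 e1 (e13 ▸ e3)
    · by_cases e23 : a2 = a3
      · exact two_out hAc ha2 ha1 (Ne.symm e12) hB2 hB3 hb23 e2 (e23 ▸ e3)
      · -- all distinct
        obtain ⟨p, hp, hpsub⟩ := path_in hAc ha1 ha2
        set P : Set W := {x | x ∈ p.support} with hP
        by_cases hmem : a3 ∈ p.support
        · obtain ⟨c, hc, d, hd, hcd, mc, md⟩ :=
            internal_two_adj p hp hmem (Ne.symm e13) (Ne.symm e23)
          have hcA : c ∈ A := hpsub c hc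
          have hdA : d ∈ A := hpsub d hd
          exact ⟨a3, ha3, three_adj S hcd (fun h => hB3 (by rw [← h]; exact hcA)) (fun h => hB3 (by rw [← h]; exact hdA))
            mc md e3⟩
        · obtain ⟨q, hq, hqsub⟩ := path_in hAc ha3 ha1
          have ha1P : a1 ∈ P := p.start_mem_support
          obtain ⟨m, hmP, n, hnm, hnP, hns⟩ := exists_first P ha1P q hmem
          have hnA : n ∈ A := hqsub n hns
          have hmA : m ∈ A := hpsub m hmP
          by_cases hm1 : m = a1
          · subst hm1
            obtain ⟨c, hc, hac⟩ := second_vertex p e12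
            have hcA : c ∈ A := hpsub c hc
            refine ⟨m, hmA, three_adj S (fun h => hnP (by rw [← h]; exact hc)) (fun h => hB1 (by rw [← h]; exact hcA))
              (fun h => hB1 (by rw [← h]; exact hnA)) hac hnm.symm e1⟩
          · by_cases hm2 : m = a2
            · subst hm2
              obtain ⟨c, hc, hac⟩ := second_vertex p.reverse (Ne.symm e12)
              have hcp : c ∈ p.support := by
                rw [Walk.support_reverse, List.mem_reverse] at hc; exact hc
              have hcA : c ∈ A := hpsub c hcp
              refine ⟨m, hmA, three_adj S (fun h => hnP (by rw [← h]; exact hcp)) (fun h => hB2 (by rw [← h]; exact hcA))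
                (fun h => hB2 (by rw [← h]; exact hnA)) hac hnm.symm e2⟩
            · obtain ⟨c, hc, d, hd, hcd, mc, md⟩ := internal_two_adj p hp hmP hm1 hm2
              refine ⟨m, hmA, three_adj S hcd (fun (h : c = n) => hnP (by rw [← h]; exact hc))
                (fun (h : d = n) => hnP (by rw [← h]; exact hd)) mc md hnm.symm⟩

end Helpers

section TreeSide
variable {V : Type*} {T : SimpleGraph V}

/-- The set of vertices reachable from `w` without passing through `u`. -/
def Side (T : SimpleGraph V) (u w : V) : Set V :=
  {v | ∃ p : T.Walk w v, p.IsPath ∧ u ∉ p.support}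

lemma mem_side_self {u w : V} (huw : u ≠ w) : w ∈ Side T u w :=
  ⟨Walk.nil, by simp, by simp [huw]⟩

lemma start_not_mem_side (u w : V) : u ∉ Side T u w := by
  rintro ⟨p, -, hu⟩
  exact hu p.end_mem_support

lemma side_cover_start (hc : T.Connected) (u : V) {v : V} (hv : v ≠ u) :
    ∃ w, T.Adj u w ∧ v ∈ Side T u w := by
  classical
  obtain ⟨q⟩ := hc u v
  obtain ⟨p, hp⟩ : ∃ p : T.Walk u v, p.IsPath := ⟨q.bypass, q.bypass_isPath⟩
  cases p with
  | nil => exact absurd rfl hv.symm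
  | @cons _ w _ h r =>
    rw [Walk.cons_isPath_iff] at hp
    exact ⟨w, h, r, hp.1, hp.2⟩

lemma side_cover_step {u w : V} {v : V} (hv : v ∈ Side T u w) (hvw : v ≠ w) :
    ∃ w', T.Adj w w' ∧ w' ≠ u ∧ v ∈ Side T w w' := by
  obtain ⟨p, hp, hu⟩ := hv
  cases p with
  | nil => exact absurd rfl hvw.symm
  | @cons _ w' _ h r =>
    rw [Walk.cons_isPath_iff] at hp
    refine ⟨w', h, fun hEq => hu ?_, r, hp.1, hp.2⟩
    rw [← hEq]
    exact List.mem_cons_of_mem _ (Walk.start_mem_support r)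

lemma side_mono (hT : T.IsTree) {u w w' : V} (huw : T.Adj u w) (hww' : T.Adj w w')
    (hw'u : w' ≠ u) : Side T w w' ⊆ Side T u w := by
  rintro v ⟨q, hq, hwq⟩
  classical
  have huq : u ∉ q.support := by
    intro huq
    have ht : (q.takeUntil u huq).IsPath := hq.takeUntil huq
    have hwt : w ∉ (q.takeUntil u huq).support :=
      fun hw => hwq (q.support_takeUntil_subset huq hw)
    have hp2 : (Walk.cons huw (Walk.cons hww' Walk.nil)).IsPath := by
      rw [Walk.cons_isPath_iff, Walk.cons_isPath_iff]
      refine ⟨⟨Walk.IsPath.nil, by simpa using hww'.ne⟩, ?_⟩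
      simp only [Walk.support_cons, Walk.support_nil, List.mem_cons, List.mem_singleton,
        List.not_mem_nil, or_false]
      push_neg
      exact ⟨huw.ne, Ne.symm hw'u⟩
    have hEq := (hT.existsUnique_path u w').unique ht.reverse hp2
    have hwmem : w ∈ (q.takeUntil u huq).reverse.support := by
      rw [hEq]
      simp
    rw [Walk.support_reverse, List.mem_reverse] at hwmem
    exact hwt hwmem
  exact ⟨Walk.cons hww' q, by rw [Walk.cons_isPath_iff]; exact ⟨hq, hwq⟩,
    by simp only [Walk.support_cons, List.mem_cons]; push_neg; exact ⟨huw.ne, huq⟩⟩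

/-- Pigeonhole: infinitely many F-vertices beyond some neighbor. -/
lemma side_pigeonhole (hlf : ∀ v, (T.neighborSet v).Finite) {F B : Set V}
    (hBinf : B.Infinite) (u : V) (Q : V → Prop)
    (hcov : ∀ v ∈ B, ∃ w ∈ T.neighborSet u, Q w ∧ v ∈ Side T u w ∧ v ∈ F) :
    ∃ w, T.Adj u w ∧ Q w ∧ (F ∩ Side T u w).Infinite := by
  by_contra hall
  push_neg at hall
  have hfin : (⋃ w ∈ T.neighborSet u, ((F ∩ Side T u w) ∩ {_x | Q w})).Finite := by
    refine Set.Finite.biUnion (hlf u) ?_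
    intro w hw
    by_cases hQ : Q w
    · have := hall w hw hQ
      exact this.subset Set.inter_subset_left
    · have : ((F ∩ Side T u w) ∩ {_x | Q w}) = ∅ := by
        ext z; simp [hQ]
      rw [this]; exact Set.finite_empty
  refine hBinf (hfin.subset ?_)
  intro v hv
  obtain ⟨w, hw, hQ, hside, hF⟩ := hcov v hv
  exact Set.mem_biUnion hw ⟨⟨hF, hside⟩, hQ⟩

lemma pair_eq_of_encard_two {α : Type*} {s : Set α} {a b : α} (h : s.encard = 2)
    (ha : a ∈ s) (hb : b ∈ s) (hab : a ≠ b) : s = {a, b} := by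
  obtain ⟨x, y, hxy, rfl⟩ := Set.encard_eq_two.mp h
  rcases ha with rfl | ha <;> rcases hb with rfl | hb
  · exact absurd rfl hab
  · rw [Set.mem_singleton_iff] at hb; subst hb; rfl
  · rw [Set.mem_singleton_iff] at ha; subst ha
    rw [Set.pair_comm]
  · rw [Set.mem_singleton_iff] at ha hb; subst ha; subst hb; exact absurd rfl hab

/-- Main finiteness lemma: a locally finite small tree has finitely many
vertices of degree more than 2. -/
lemma big_finite (hT : T.IsTree) (hlf : ∀ v, (T.neighborSet v).Finite)
    (hs : IsSmall T) : {v | 2 < eDeg T v}.Finite := by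
  classical
  set F := {v | 2 < eDeg T v} with hF
  by_contra hinf
  have hinf : F.Infinite := hinf
  -- starting vertex
  obtain ⟨u0, -⟩ := hinf.nonempty
  -- initial state
  have hstart : ∃ w, T.Adj u0 w ∧ (F ∩ Side T u0 w).Infinite := by
    have hcov : ∀ v ∈ F \ {u0}, ∃ w ∈ T.neighborSet u0,
        True ∧ v ∈ Side T u0 w ∧ v ∈ F := by
      rintro v ⟨hvF, hvne⟩
      have hvne' : v ≠ u0 := by simpa using hvne
      obtain ⟨w, hw, hside⟩ := side_cover_start hT.isConnected u0 hvne'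
      exact ⟨w, hw, trivial, hside, hvF⟩
    obtain ⟨w, h1, -, h3⟩ :=
      side_pigeonhole hlf (hinf.diff (Set.finite_singleton u0)) u0 (fun _ => True) hcov
    exact ⟨w, h1, h3⟩
  -- the step
  have hstep : ∀ u w, T.Adj u w → (F ∩ Side T u w).Infinite →
      ∃ w', T.Adj w w' ∧ w' ≠ u ∧ (F ∩ Side T w w').Infinite := by
    intro u w hadj hinf'
    have h2 : ((F ∩ Side T u w) \ {w}).Infinite := hinf'.diff (Set.finite_singleton w)
    refine side_pigeonhole hlf h2 w (fun w' => w' ≠ u) ?_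
    rintro v ⟨⟨hvF, hvside⟩, hvw⟩
    have hvw' : v ≠ w := by simpa using hvw
    obtain ⟨w', hadj', hne, hside'⟩ := side_cover_step hvside hvw'
    exact ⟨w', hadj', hne, hside', hvF⟩
  -- build the ray by iterating the step
  let State := {x : V × V // T.Adj x.1 x.2 ∧ (F ∩ Side T x.1 x.2).Infinite}
  have stepEx : ∀ s : State, ∃ w', T.Adj s.1.2 w' ∧ w' ≠ s.1.1 ∧
      (F ∩ Side T s.1.2 w').Infinite := fun s => hstep s.1.1 s.1.2 s.2.1 s.2.2
  choose nxt hnxt1 hnxt2 hnxt3 using stepEx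
  let step : State → State := fun s => ⟨(s.1.2, nxt s), hnxt1 s, hnxt3 s⟩
  obtain ⟨w0, hw0, hw0inf⟩ := hstart
  let s0 : State := ⟨(u0, w0), hw0, hw0inf⟩
  let g : ℕ → State := fun n => step^[n] s0
  have hgsucc : ∀ n, g (n+1) = step (g n) := fun n => Function.iterate_succ_apply' step n s0
  let f : ℕ → V := fun n => (g n).1.1
  have hfsucc : ∀ n, f (n+1) = (g n).1.2 := by
    intro n; show (g (n+1)).1.1 = (g n).1.2; rw [hgsucc]
  have hadjf : ∀ n, T.Adj (f n) (f (n+1)) := by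
    intro n; rw [hfsucc]; exact (g n).2.1
  have hback : ∀ n, f (n+2) ≠ f n := by
    intro n
    have h1 := hnxt2 (g n)
    have h2 : f (n+2) = nxt (g n) := by
      show (g (n+2)).1.1 = nxt (g n)
      rw [show (n:ℕ)+2 = (n+1)+1 from rfl, hgsucc, hgsucc]
    rw [h2]; exact h1
  have hSideInf : ∀ n, (F ∩ Side T (f n) (f (n+1))).Infinite := by
    intro n; rw [hfsucc]; exact (g n).2.2
  have hmono' : ∀ m n, m ≤ n → Side T (f n) (f (n+1)) ⊆ Side T (f m) (f (m+1)) := by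
    intro m n hmn
    induction n, hmn using Nat.le_induction with
    | base => exact subset_rfl
    | succ n hmn ih =>
      exact subset_trans (side_mono hT (hadjf n) (hadjf (n+1)) (hback n)) ih
  have hmem : ∀ m n, m < n → f n ∈ Side T (f m) (f (m+1)) := by
    intro m n hmn
    obtain ⟨k, rfl⟩ : ∃ k, n = k + 1 := ⟨n-1, by omega⟩
    exact hmono' m k (by omega) (mem_side_self (hadjf k).ne)
  have hinj : Function.Injective f := by
    intro m n hEq
    by_contra hne
    rcases Nat.lt_or_ge m n with h | h
    · have h' := hmem m n h
      rw [← hEq] at h'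
      exact start_not_mem_side (f m) (f (m+1)) h'
    · have h' := hmem n m (by omega)
      rw [hEq] at h'
      exact start_not_mem_side (f n) (f (n+1)) h'
  obtain ⟨M, hM⟩ := hs f ⟨hinj, hadjf⟩
  have pairNbhd : ∀ n, M ≤ n → T.neighborSet (f (n+1)) = {f n, f (n+2)} := by
    intro n hn
    refine pair_eq_of_encard_two (hM (n+1) (by omega)) ?_ ?_ ?_
    · exact (hadjf n).symm
    · exact hadjf (n+1)
    · exact fun h => hback n h.symm
  have trap : ∀ (k : ℕ) (n v : _) (p : T.Walk (f (n+1)) v), p.length = k → M ≤ n → p.IsPath →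
      f n ∉ p.support → ∃ m, n < m ∧ v = f m := by
    intro k
    induction k with
    | zero =>
      intro n v p hlen hn hp hfn
      exact ⟨n+1, by omega, (Walk.eq_of_length_eq_zero hlen).symm⟩
    | succ k ih =>
      intro n v p hlen hn hp hfn
      cases p with
      | nil => simp at hlen
      | @cons _ x _ h q =>
        rw [Walk.cons_isPath_iff] at hp
        rw [Walk.support_cons, List.mem_cons] at hfn
        push_neg at hfn
        have hx : x = f (n+2) := by
          have hxnb : x ∈ T.neighborSet (f (n+1)) := h
          rw [pairNbhd n hn] at hxnb
          rcases Set.mem_insert_iff.mp hxnb with h2 | h2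
          · subst h2; exact absurd q.start_mem_support hfn.2
          · rw [Set.mem_singleton_iff] at h2; exact h2
        subst hx
        have hlen' : q.length = k := by simpa using hlen
        obtain ⟨m, hm, rfl⟩ := ih (n+1) v q hlen' (by omega) hp.1 hp.2
        exact ⟨m, by omega, rfl⟩
  obtain ⟨v, hvmem⟩ := (hSideInf M).nonempty
  obtain ⟨hvF, p, hp, hfMp⟩ := hvmem
  obtain ⟨m, hm, rfl⟩ := trap p.length M v p rfl (le_refl M) hp hfMp
  have h2 : eDeg T (f m) = 2 := hM m (by omega)
  have h3 : 2 < eDeg T (f m) := hvF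
  rw [h2] at h3
  exact lt_irrefl _ h3

end TreeSide

/-- For locally finite small trees `T, S` with models in both directions,
the branch set of every vertex of degree `> 2` contains exactly one vertex of `S` of
degree `> 2`. -/
theorem stmt18 {V W : Type*} (T : SimpleGraph V) (S : SimpleGraph W)
    (hT : T.IsTree) (hS : S.IsTree)
    (hlfT : ∀ v, (T.neighborSet v).Finite) (hlfS : ∀ w, (S.neighborSet w).Finite)
    (hsT : IsSmall T) (hsS : IsSmall S)
    (μ : V → Set W) (hμ : IsModel T S μ)
    (ν : W → Set V) (hν : IsModel S T ν) :
    ∀ v, 2 < eDeg T v → ∃! w, w ∈ μ v ∧ 2 < eDeg S w := by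
  intro v hv
  classical
  have hFT : {x : V | 2 < eDeg T x}.Finite := big_finite hT hlfT hsT
  have hFS : {x : W | 2 < eDeg S x}.Finite := big_finite hS hlfS hsS
  obtain ⟨w1, hw1mu, hw1big⟩ := branch_big T μ hμ v hv
  refine ⟨w1, ⟨hw1mu, hw1big⟩, ?_⟩
  rintro w2 ⟨hw2mu, hw2big⟩
  by_contra hne
  -- h maps vertices of big T-degree injectively into {big S-degree} \ {w1}
  have hwit : ∀ x : V, 2 < eDeg T x → ∃ w ∈ μ x, 2 < eDeg S w := fun x hx =>
    branch_big T μ hμ x hx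
  have hwit' : ∀ w : W, 2 < eDeg S w → ∃ x ∈ ν w, 2 < eDeg T x := fun w hw =>
    branch_big S ν hν w hw
  choose h1 hh1 hh1' using hwit
  choose h2 hh2 hh2' using hwit'
  set h : V → W := fun x => if hx : x = v then w2 else if hb : 2 < eDeg T x then h1 x hb else w2
    with hdef
  have hmu : ∀ x, 2 < eDeg T x → h x ∈ μ x ∧ 2 < eDeg S (h x) := by
    intro x hx
    by_cases hxv : x = v
    · subst hxv; simp only [hdef, dif_pos rfl]; exact ⟨hw2mu, hw2big⟩
    · simp only [hdef, dif_neg hxv, dif_pos hx]; exact ⟨hh1 x hx, hh1' x hx⟩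
  have hinj : Set.InjOn h {x : V | 2 < eDeg T x} := by
    intro x hx y hy hEq
    by_contra hxy
    have d1 := (hmu x hx).1
    have d2 := (hmu y hy).1
    rw [hEq] at d1
    exact Set.disjoint_left.mp (hμ.disjoint y x (Ne.symm hxy)) d2 d1
  have hmaps : ∀ x ∈ {x : V | 2 < eDeg T x}, h x ∈ {w : W | 2 < eDeg S w} \ {w1} := by
    intro x hx
    refine ⟨(hmu x hx).2, ?_⟩
    simp only [Set.mem_singleton_iff]
    intro hEq
    by_cases hxv : x = v
    · have hx2 : h x = w2 := by simp [hdef, hxv]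
      rw [hx2] at hEq
      exact hne hEq
    · have := (hmu x hx).1
      rw [hEq] at this
      exact Set.disjoint_left.mp (hμ.disjoint x v hxv) this hw1mu
  set g : W → V := fun w => if hb : 2 < eDeg S w then h2 w hb else v with hgdef
  have hgnu : ∀ w, 2 < eDeg S w → g w ∈ ν w ∧ 2 < eDeg T (g w) := by
    intro w hw
    simp only [hgdef, dif_pos hw]
    exact ⟨hh2 w hw, hh2' w hw⟩
  have hginj : Set.InjOn g {w : W | 2 < eDeg S w} := by
    intro x hx y hy hEq
    by_contra hxy
    have d1 := (hgnu x hx).1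
    have d2 := (hgnu y hy).1
    rw [hEq] at d1
    exact Set.disjoint_left.mp (hν.disjoint y x (Ne.symm hxy)) d2 d1
  have c1 : {x : V | 2 < eDeg T x}.ncard ≤ ({w : W | 2 < eDeg S w} \ {w1}).ncard :=
    Set.ncard_le_ncard_of_injOn h hmaps hinj hFS.diff
  have c2 : ({w : W | 2 < eDeg S w} \ {w1}).ncard < {w : W | 2 < eDeg S w}.ncard :=
    Set.ncard_diff_singleton_lt_of_mem hw1big hFS
  have c3 : {w : W | 2 < eDeg S w}.ncard ≤ {x : V | 2 < eDeg T x}.ncard :=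
    Set.ncard_le_ncard_of_injOn g (fun w hw => (hgnu w hw).2) hginj hFT
  omega
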